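/- (Gradient of the log-Frobenius-condition number.) Let B be an invertible n×n complex matrix and let H₁, H₂ be Hermitian n×n complex matrices. Then the function φ(t) = log ‖e^{tH₁} B e^{-tH₂}‖_F + log ‖e^{tH₂} B⁻¹ e^{-tH₁}‖_F is differentiable at t = 0, and φ'(0) = Re tr(H₁ P) + Re tr(H₂ Q), where P = B B*/‖B‖_F² − (B⁻¹)* B⁻¹/‖B⁻¹‖_F² and Q = −B* B/‖B‖_F² + B⁻¹ (B⁻¹)*/‖B⁻¹‖_F². -/

import Mathlib

open Matrix

/-- The matrix exponential of a square complex matrix. -/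
noncomputable def mexp {k : ℕ} (A : Matrix (Fin k) (Fin k) ℂ) : Matrix (Fin k) (Fin k) ℂ :=
  NormedSpace.exp A

/-- The Frobenius norm `‖A‖_F = √(tr(A*A))` of a complex matrix. -/
noncomputable def frob {m n : ℕ} (A : Matrix (Fin m) (Fin n) ℂ) : ℝ :=
  Real.sqrt (Matrix.trace (Aᴴ * A)).re


section Aux
variable {k : ℕ}

attribute [local instance] Matrix.linftyOpNormedAddCommGroup Matrix.linftyOpNormedRing
  Matrix.linftyOpNormedAlgebra

lemma hasDerivAt_mexp (H : Matrix (Fin k) (Fin k) ℂ) :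
    HasDerivAt (fun t : ℝ => mexp ((t : ℂ) • H)) H 0 := by
  have h := hasDerivAt_exp_smul_const (𝕂 := ℝ)
    (𝔸 := Matrix (Fin k) (Fin k) ℂ) H 0
  simp only [zero_smul, NormedSpace.exp_zero, one_mul] at h
  have he : (fun t : ℝ => mexp ((t : ℂ) • H)) = fun u : ℝ => NormedSpace.exp (u • H) := by
    funext t
    rw [mexp, show ((t : ℂ)) = algebraMap ℝ ℂ t from rfl,
      algebraMap_smul]
  rw [he]; exact h

lemma hasDerivAt_mexp_neg (H : Matrix (Fin k) (Fin k) ℂ) :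
    HasDerivAt (fun t : ℝ => mexp ((-t : ℂ) • H)) (-H) 0 := by
  have hm : HasDerivAt (fun t : ℝ => mexp ((t : ℂ) • H)) H (-(0:ℝ)) := by
    simpa using hasDerivAt_mexp H
  have h := hm.scomp (0 : ℝ) (hasDerivAt_neg (0 : ℝ))
  have he : (fun t : ℝ => mexp ((-t : ℂ) • H)) = (fun t : ℝ => mexp ((t : ℂ) • H)) ∘ Neg.neg := by
    funext t; simp [Function.comp]
  rw [he]
  rw [neg_one_smul] at h
  exact h

lemma hasDerivAt_conjFam (H₁ H₂ B : Matrix (Fin k) (Fin k) ℂ) :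
    HasDerivAt (fun t : ℝ => mexp ((t : ℂ) • H₁) * B * mexp ((-t : ℂ) • H₂))
      (H₁ * B - B * H₂) 0 := by
  have hu : HasDerivAt (fun t : ℝ => mexp ((t : ℂ) • H₁) * B) (H₁ * B) 0 :=
    (hasDerivAt_mexp H₁).mul_const B
  have h := hu.mul (hasDerivAt_mexp_neg H₂)
  have h0 : mexp ((-(0:ℝ) : ℂ) • H₂) = 1 := by
    simp [mexp, NormedSpace.exp_zero]
  have h1 : mexp (((0:ℝ) : ℂ) • H₁) = 1 := by
    simp [mexp, NormedSpace.exp_zero]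
  rw [h0, h1] at h
  rw [mul_one, one_mul, mul_neg, ← sub_eq_add_neg] at h
  exact h

lemma hasDerivAt_conjFam_entry (H₁ H₂ B : Matrix (Fin k) (Fin k) ℂ) (i j : Fin k) :
    HasDerivAt (fun t : ℝ => (mexp ((t : ℂ) • H₁) * B * mexp ((-t : ℂ) • H₂)) i j)
      ((H₁ * B - B * H₂) i j) 0 := by
  let L : Matrix (Fin k) (Fin k) ℂ →ₗ[ℝ] ℂ :=
    { toFun := fun A => A i j
      map_add' := fun _ _ => rfl
      map_smul' := fun _ _ => rfl }
  exact (LinearMap.toContinuousLinearMap L).hasFDerivAt.comp_hasDerivAt 0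
    (hasDerivAt_conjFam H₁ H₂ B)

end Aux

section Scalar
variable {k : ℕ}

lemma hasDerivAt_normSq' {z : ℝ → ℂ} {z' : ℂ} {t : ℝ} (hz : HasDerivAt z z' t) :
    HasDerivAt (fun s => Complex.normSq (z s)) (2 * (((starRingEnd ℂ) (z t)) * z').re) t := by
  have hre : HasDerivAt (fun s => (z s).re) z'.re t := by
    exact Complex.reCLM.hasFDerivAt.comp_hasDerivAt t hz
  have him : HasDerivAt (fun s => (z s).im) z'.im t := by
    exact Complex.imCLM.hasFDerivAt.comp_hasDerivAt t hz
  have h := (hre.mul hre).add (him.mul him)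
  have he : (fun s => Complex.normSq (z s)) =
      fun s => (z s).re * (z s).re + (z s).im * (z s).im := by
    funext s; simp [Complex.normSq_apply]
  rw [he]
  refine h.congr_deriv ?_
  simp only [Complex.mul_re, Complex.conj_re, Complex.conj_im]
  ring

lemma trace_mul_re (A : Matrix (Fin k) (Fin k) ℂ) :
    (Matrix.trace (Aᴴ * A)).re = ∑ i, ∑ j, Complex.normSq (A i j) := by
  rw [Finset.sum_comm]
  simp only [Matrix.trace, Matrix.diag, Matrix.mul_apply, Matrix.conjTranspose_apply,
    Complex.re_sum, Complex.normSq_apply, Complex.mul_re, Complex.star_def,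
    Complex.conj_re, Complex.conj_im]
  congr 1; funext j; congr 1; funext i; ring

lemma trace_conj_mul_re (B D : Matrix (Fin k) (Fin k) ℂ) :
    (Matrix.trace (Bᴴ * D)).re = ∑ i, ∑ j, ((starRingEnd ℂ) (B i j) * D i j).re := by
  rw [Finset.sum_comm]
  simp only [Matrix.trace, Matrix.diag, Matrix.mul_apply, Matrix.conjTranspose_apply,
    Complex.re_sum, Complex.star_def]

lemma frob_eq (A : Matrix (Fin k) (Fin k) ℂ) :
    frob A = Real.sqrt (∑ i, ∑ j, Complex.normSq (A i j)) := by
  rw [frob, trace_mul_re]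

lemma hasDerivAt_log_frob (B H₁ H₂ : Matrix (Fin k) (Fin k) ℂ) (hB : B ≠ 0) :
    HasDerivAt (fun t : ℝ =>
        Real.log (frob (mexp ((t : ℂ) • H₁) * B * mexp ((-t : ℂ) • H₂))))
      ((Matrix.trace (Bᴴ * (H₁ * B - B * H₂))).re / frob B ^ 2) 0 := by
  set F : ℝ → Matrix (Fin k) (Fin k) ℂ :=
    fun t => mexp ((t : ℂ) • H₁) * B * mexp ((-t : ℂ) • H₂) with hF
  set g : ℝ → ℝ := fun t => ∑ i, ∑ j, Complex.normSq (F t i j) with hgdef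
  have hF0 : F 0 = B := by
    simp [hF, mexp, NormedSpace.exp_zero]
  have hg0B : g 0 = ∑ i, ∑ j, Complex.normSq (B i j) := by
    simp [hgdef, hF0]
  have hgnonneg : ∀ t, 0 ≤ g t := fun t =>
    Finset.sum_nonneg fun i _ => Finset.sum_nonneg fun j _ => Complex.normSq_nonneg _
  have hgpos : 0 < g 0 := by
    rcases (hgnonneg 0).lt_or_eq with h | h
    · exact h
    · exfalso
      apply hB
      ext i j
      have h0 : ∑ i, ∑ j, Complex.normSq (B i j) = 0 := by rw [← hg0B, ← h]
      have h1 := (Finset.sum_eq_zero_iff_of_nonneg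
        (fun i _ => Finset.sum_nonneg fun j _ => Complex.normSq_nonneg _)).mp h0 i
        (Finset.mem_univ i)
      have h2 := (Finset.sum_eq_zero_iff_of_nonneg
        (fun j _ => Complex.normSq_nonneg _)).mp h1 j (Finset.mem_univ j)
      simpa [Complex.normSq_eq_zero] using h2
  have hfb : frob B ^ 2 = g 0 := by
    rw [frob_eq, Real.sq_sqrt (by rw [← hg0B]; exact hgnonneg 0), hg0B]
  have hg : HasDerivAt g (2 * (Matrix.trace (Bᴴ * (H₁ * B - B * H₂))).re) 0 := by
    have hsum : HasDerivAt g
        (∑ i, ∑ j, 2 * (((starRingEnd ℂ) (B i j)) * ((H₁ * B - B * H₂) i j)).re) 0 := by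
      apply HasDerivAt.fun_sum
      intro i _
      apply HasDerivAt.fun_sum
      intro j _
      have hz := hasDerivAt_conjFam_entry H₁ H₂ B i j
      have := hasDerivAt_normSq' hz
      have h2 : ((mexp (((0:ℝ):ℂ) • H₁) * B * mexp ((-(0:ℝ):ℂ) • H₂)) i j) = B i j := by
        rw [show (mexp (((0:ℝ):ℂ) • H₁) * B * mexp ((-(0:ℝ):ℂ) • H₂)) = F 0 from rfl, hF0]
      rw [h2] at this
      exact this
    convert hsum using 1
    rw [trace_conj_mul_re, Finset.mul_sum]
    congr 1; funext i; rw [Finset.mul_sum]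
  have hlog := (hg.log hgpos.ne').div_const 2
  have hfun : (fun t : ℝ => Real.log (frob (F t))) = fun t => Real.log (g t) / 2 := by
    funext t
    rw [frob_eq, Real.log_sqrt (hgnonneg t)]
  rw [show (fun t : ℝ =>
      Real.log (frob (mexp ((t : ℂ) • H₁) * B * mexp ((-t : ℂ) • H₂)))) =
      fun t : ℝ => Real.log (frob (F t)) from rfl, hfun]
  refine hlog.congr_deriv ?_
  rw [hfb]
  ring

end Scalar


/-- **Gradient of the log-Frobenius condition number.**  For an invertible `B` and Hermitian
`H₁, H₂`, the function `φ(t) = log ‖e^{tH₁} B e^{-tH₂}‖_F + log ‖e^{tH₂} B⁻¹ e^{-tH₁}‖_F`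
is differentiable at `0` with
`φ'(0) = Re tr(H₁ P) + Re tr(H₂ Q)`, where
`P = B B*/‖B‖_F² − (B⁻¹)* B⁻¹/‖B⁻¹‖_F²` and `Q = −B* B/‖B‖_F² + B⁻¹(B⁻¹)*/‖B⁻¹‖_F²`. -/
theorem grad_log_kappaF (n : ℕ) (B : Matrix (Fin n) (Fin n) ℂ) (hB : IsUnit B)
    (H₁ H₂ : Matrix (Fin n) (Fin n) ℂ) (hH₁ : H₁.IsHermitian) (hH₂ : H₂.IsHermitian) :
    HasDerivAt (fun t : ℝ =>
        Real.log (frob (mexp ((t : ℂ) • H₁) * B * mexp ((-t : ℂ) • H₂))) +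
        Real.log (frob (mexp ((t : ℂ) • H₂) * B⁻¹ * mexp ((-t : ℂ) • H₁))))
      ((Matrix.trace (H₁ *
          (((frob B ^ 2 : ℝ) : ℂ)⁻¹ • (B * Bᴴ) -
            ((frob B⁻¹ ^ 2 : ℝ) : ℂ)⁻¹ • ((B⁻¹)ᴴ * B⁻¹)))).re +
       (Matrix.trace (H₂ *
          (-(((frob B ^ 2 : ℝ) : ℂ)⁻¹ • (Bᴴ * B)) +
            ((frob B⁻¹ ^ 2 : ℝ) : ℂ)⁻¹ • (B⁻¹ * (B⁻¹)ᴴ)))).re)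
      0 := by
  rcases Nat.eq_zero_or_pos n with hn | hn
  · subst hn
    have hfr : ∀ A : Matrix (Fin 0) (Fin 0) ℂ, frob A = 0 := by
      intro A
      simp [frob, Matrix.trace]
    have htr : ∀ A : Matrix (Fin 0) (Fin 0) ℂ, Matrix.trace A = 0 := by
      intro A; simp [Matrix.trace]
    simp only [hfr, htr, Real.log_zero, add_zero, Complex.zero_re]
    exact hasDerivAt_const 0 0
  · haveI : NeZero n := ⟨hn.ne'⟩
    have hBne : B ≠ 0 := hB.ne_zero
    have hBinv : B⁻¹ ≠ 0 := by
      intro h0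
      have h1 : B⁻¹ * B = 1 :=
        Matrix.nonsing_inv_mul B ((Matrix.isUnit_iff_isUnit_det B).mp hB)
      rw [h0, zero_mul] at h1
      exact one_ne_zero h1.symm
    have h1 := hasDerivAt_log_frob B H₁ H₂ hBne
    have h2 := hasDerivAt_log_frob B⁻¹ H₂ H₁ hBinv
    have hsum := h1.add h2
    refine hsum.congr_deriv ?_
    have e1 : Matrix.trace (H₁ * (B * Bᴴ)) = Matrix.trace (Bᴴ * (H₁ * B)) := by
      rw [← mul_assoc, Matrix.trace_mul_comm]
    have e2 : Matrix.trace (H₂ * (Bᴴ * B)) = Matrix.trace (Bᴴ * (B * H₂)) := by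
      rw [Matrix.trace_mul_comm, mul_assoc]
    have e3 : Matrix.trace (H₁ * ((B⁻¹)ᴴ * B⁻¹)) = Matrix.trace ((B⁻¹)ᴴ * (B⁻¹ * H₁)) := by
      rw [Matrix.trace_mul_comm, mul_assoc]
    have e4 : Matrix.trace (H₂ * (B⁻¹ * (B⁻¹)ᴴ)) = Matrix.trace ((B⁻¹)ᴴ * (H₂ * B⁻¹)) := by
      rw [← mul_assoc, Matrix.trace_mul_comm]
    simp only [Matrix.mul_sub, Matrix.mul_add, Matrix.mul_neg, Matrix.mul_smul,
      Matrix.trace_sub, Matrix.trace_add, Matrix.trace_neg, Matrix.trace_smul,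
      smul_eq_mul, e1, e2, e3, e4, ← Complex.ofReal_inv,
      Complex.add_re, Complex.sub_re, Complex.neg_re, Complex.re_ofReal_mul]
    ring
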